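/- Let n ≥ 3 with n ≡ −1 (mod 4) and let G = Z/nZ. Let S1 = S2 = 0^{(n−1)/2}·1^{(n−1)/2}·((n+1)/2) (the sequence consisting of (n−1)/2 copies of 0, (n−1)/2 copies of 1, and one copy of (n+1)/2 in G). Then σ(S1) = σ(S2) = 0, max{h(S1), h(S2)} = (n−1)/2, and 0 ∉ S1·S2. -/

import Mathlib

/-- The weighted product set `S · T` of two sequences (multisets) over a commutative ring. -/
def wProd {G : Type*} [CommRing G] (S T : Multiset G) : Set G :=
  { g | ∃ l1 l2 : List G, (l1 : Multiset G) = S ∧ (l2 : Multiset G) = T ∧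
      (List.zipWith (· * ·) l1 l2).sum = g }

/-- `h(S)`: the maximum multiplicity of a term in the sequence `S`. -/
def maxMult {G : Type*} [DecidableEq G] (S : Multiset G) : ℕ :=
  S.toFinset.sup fun g => S.count g


lemma core_ident (z : Multiset (ℕ × ℕ)) (hz : ∀ p ∈ z, p.1 ≤ 2 ∧ p.2 ≤ 2) :
    (z.map fun p => p.1 * p.2).sum =
      4 * z.countP (fun p => p.1 = 2 ∧ p.2 = 2) + 2 * z.countP (fun p => p.1 = 2 ∧ p.2 = 1)
        + 2 * z.countP (fun p => p.1 = 1 ∧ p.2 = 2) + z.countP (fun p => p.1 = 1 ∧ p.2 = 1) ∧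
    z.countP (fun p => p.1 = 2 ∧ p.2 = 2) + z.countP (fun p => p.1 = 2 ∧ p.2 = 1)
      ≤ z.countP (fun p => p.1 = 2) ∧
    z.countP (fun p => p.1 = 2 ∧ p.2 = 2) + z.countP (fun p => p.1 = 1 ∧ p.2 = 2)
      ≤ z.countP (fun p => p.2 = 2) ∧
    z.countP (fun p => p.1 = 1 ∧ p.2 = 1) + z.countP (fun p => p.1 = 2 ∧ p.2 = 1)
      ≤ z.countP (fun p => p.2 = 1) ∧
    z.countP (fun p => p.1 = 1 ∧ p.2 = 1) + z.countP (fun p => p.1 = 1 ∧ p.2 = 2)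
      ≤ z.countP (fun p => p.1 = 1) ∧
    z.countP (fun p => ¬ p.1 = 0) + z.countP (fun p => ¬ p.2 = 0)
      ≤ Multiset.card z + (z.countP (fun p => p.1 = 2 ∧ p.2 = 2) + z.countP (fun p => p.1 = 2 ∧ p.2 = 1)
        + z.countP (fun p => p.1 = 1 ∧ p.2 = 2) + z.countP (fun p => p.1 = 1 ∧ p.2 = 1)) := by
  induction z using Multiset.induction_on with
  | empty => simp
  | cons p z ih =>
    have hp := hz p (Multiset.mem_cons_self p z)
    have ih' := ih (fun q hq => hz q (Multiset.mem_cons_of_mem hq))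
    obtain ⟨h1, h2, h3, h4, h5, h6⟩ := ih'
    obtain ⟨p1, p2⟩ := p
    simp only [Multiset.countP_cons, Multiset.map_cons, Multiset.sum_cons, Multiset.card_cons]
    obtain ⟨hp1, hp2⟩ := hp
    interval_cases p1 <;> interval_cases p2 <;> simp <;> omega


lemma my_countP_singleton {α : Type*} (p : α → Prop) [DecidablePred p] (a : α) :
    Multiset.countP p ({a} : Multiset α) = if p a then 1 else 0 := by
  rw [← Multiset.cons_zero, Multiset.countP_cons]; simp

lemma my_countP_replicate {α : Type*} (p : α → Prop) [DecidablePred p] (n : ℕ) (a : α) :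
    Multiset.countP p (Multiset.replicate n a) = if p a then n else 0 := by
  induction n with
  | zero => simp
  | succ n ih => rw [Multiset.replicate_succ, Multiset.countP_cons, ih]; split <;> simp

lemma key_count (m : ℕ) (hm : 1 ≤ m) (hmod : (2*m+1) % 4 = 3)
    (z : Multiset (ℕ × ℕ))
    (h1 : z.map Prod.fst = Multiset.replicate m 0 + Multiset.replicate m 2 + {1})
    (h2 : z.map Prod.snd = Multiset.replicate m 0 + Multiset.replicate m 2 + {1}) :
    ¬ (2*m+1) ∣ (z.map fun p => p.1 * p.2).sum := by
  have hz : ∀ p ∈ z, p.1 ≤ 2 ∧ p.2 ≤ 2 := by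
    intro p hp
    constructor
    · have : p.1 ∈ z.map Prod.fst := Multiset.mem_map_of_mem _ hp
      rw [h1] at this
      simp [Multiset.mem_replicate] at this
      omega
    · have : p.2 ∈ z.map Prod.snd := Multiset.mem_map_of_mem _ hp
      rw [h2] at this
      simp [Multiset.mem_replicate] at this
      omega
  obtain ⟨e1, e2, e3, e4, e5, e6⟩ := core_ident z hz
  have hcard : Multiset.card z = 2*m+1 := by
    have := congrArg Multiset.card h1
    simpa [two_mul] using this
  have hf2 : z.countP (fun p => p.1 = 2) = m := by
    have : Multiset.countP (fun x => x = 2) (z.map Prod.fst) = m := by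
      rw [h1]; simp [my_countP_replicate, my_countP_singleton]
    rw [Multiset.countP_map] at this
    simpa [Multiset.countP_eq_card_filter] using this
  have hf1 : z.countP (fun p => p.1 = 1) = 1 := by
    have : Multiset.countP (fun x => x = 1) (z.map Prod.fst) = 1 := by
      rw [h1]; simp [my_countP_replicate, my_countP_singleton]
    rw [Multiset.countP_map] at this
    simpa [Multiset.countP_eq_card_filter] using this
  have hf0 : z.countP (fun p => ¬ p.1 = 0) = m + 1 := by
    have : Multiset.countP (fun x => ¬ x = 0) (z.map Prod.fst) = m + 1 := by
      rw [h1]; simp [my_countP_replicate, my_countP_singleton]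
    rw [Multiset.countP_map] at this
    simpa [Multiset.countP_eq_card_filter] using this
  have hs2 : z.countP (fun p => p.2 = 2) = m := by
    have : Multiset.countP (fun x => x = 2) (z.map Prod.snd) = m := by
      rw [h2]; simp [my_countP_replicate, my_countP_singleton]
    rw [Multiset.countP_map] at this
    simpa [Multiset.countP_eq_card_filter] using this
  have hs1 : z.countP (fun p => p.2 = 1) = 1 := by
    have : Multiset.countP (fun x => x = 1) (z.map Prod.snd) = 1 := by
      rw [h2]; simp [my_countP_replicate, my_countP_singleton]
    rw [Multiset.countP_map] at this
    simpa [Multiset.countP_eq_card_filter] using this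
  have hs0 : z.countP (fun p => ¬ p.2 = 0) = m + 1 := by
    have : Multiset.countP (fun x => ¬ x = 0) (z.map Prod.snd) = m + 1 := by
      rw [h2]; simp [my_countP_replicate, my_countP_singleton]
    rw [Multiset.countP_map] at this
    simpa [Multiset.countP_eq_card_filter] using this
  rintro ⟨q, hq⟩
  rw [hf2] at e2
  rw [hf1] at e5
  rw [hs2] at e3
  rw [hs1] at e4
  rw [hf0, hs0, hcard] at e6
  have hq1 : q = 1 := by
    rcases Nat.lt_or_ge q 2 with h | h
    · interval_cases q
      · omega
      · rfl
    · have h2 : (2*m+1) * 2 ≤ (2*m+1) * q := Nat.mul_le_mul_left _ h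
      omega
  rw [hq1, mul_one] at hq
  omega

lemma my_map_zip_eq_zipWith {α β γ : Type*} (f : α → β → γ) :
    ∀ (u : List α) (v : List β),
      List.map (fun p => f p.1 p.2) (u.zip v) = List.zipWith f u v
  | [], _ => by simp
  | _ :: _, [] => by simp
  | a :: u, b :: v => by simp [my_map_zip_eq_zipWith f u v]

lemma my_bridge (n : ℕ) (f : ZMod n → ℕ) :
    ∀ (l1 l2 : List (ZMod n)), (∀ x ∈ l1, ((f x : ℕ) : ZMod n) = 2 * x) →
      (∀ x ∈ l2, ((f x : ℕ) : ZMod n) = 2 * x) →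
      (((List.zipWith (· * ·) (l1.map f) (l2.map f)).sum : ℕ) : ZMod n) =
        4 * (List.zipWith (· * ·) l1 l2).sum
  | [], l2, _, _ => by simp
  | a :: l1, [], _, _ => by simp
  | a :: l1, b :: l2, h1, h2 => by
    have ih := my_bridge n f l1 l2 (fun x hx => h1 x (List.mem_cons_of_mem _ hx))
      (fun x hx => h2 x (List.mem_cons_of_mem _ hx))
    have ha := h1 a (List.mem_cons_self)
    have hb := h2 b (List.mem_cons_self)
    simp only [List.map_cons, List.zipWith_cons_cons, List.sum_cons]
    rw [Nat.cast_add, Nat.cast_mul, ha, hb, ih]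
    ring

theorem stmt7 (n : ℕ) (hn : 3 ≤ n) (hmod : n % 4 = 3)
    (S1 S2 : Multiset (ZMod n))
    (hS1 : S1 = Multiset.replicate ((n - 1) / 2) (0 : ZMod n) +
        Multiset.replicate ((n - 1) / 2) (1 : ZMod n) + {(((n + 1) / 2 : ℕ) : ZMod n)})
    (hS2 : S2 = S1) :
    S1.sum = 0 ∧ S2.sum = 0 ∧
    max (maxMult S1) (maxMult S2) = (n - 1) / 2 ∧
    (0 : ZMod n) ∉ wProd S1 S2 := by
  haveI : NeZero n := ⟨by omega⟩
  haveI : Fact (1 < n) := ⟨by omega⟩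
  set m : ℕ := (n - 1) / 2 with hm
  set c : ℕ := (n + 1) / 2 with hc
  have hnm : n = 2 * m + 1 := by omega
  have hm1 : 1 ≤ m := by omega
  have hcm : c = m + 1 := by omega
  have hcn : c < n := by omega
  -- distinctness
  have h10 : (1 : ZMod n) ≠ 0 := one_ne_zero
  have hc0 : ((c : ℕ) : ZMod n) ≠ 0 := by
    rw [Ne, ZMod.natCast_eq_zero_iff]
    intro h
    have := Nat.le_of_dvd (by omega) h
    omega
  have hval : ((c : ℕ) : ZMod n).val = c := by
    rw [ZMod.val_natCast, Nat.mod_eq_of_lt hcn]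
  have hc1 : ((c : ℕ) : ZMod n) ≠ 1 := by
    intro h
    have := congrArg ZMod.val h
    rw [hval, ZMod.val_one] at this
    omega
  -- sum
  have hsum0 : S1.sum = 0 := by
    rw [hS1]
    simp only [Multiset.sum_add, Multiset.sum_replicate, Multiset.sum_singleton,
      smul_zero, nsmul_eq_mul, mul_one, zero_add]
    have : ((m : ℕ) : ZMod n) + ((c : ℕ) : ZMod n) = ((m + c : ℕ) : ZMod n) := by push_cast; ring
    rw [this]
    have : m + c = n := by omega
    rw [this, ZMod.natCast_self]
  -- counts
  have hcount0 : S1.count 0 = m := by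
    rw [hS1]
    simp [Multiset.count_replicate, h10.symm, Ne.symm hc0]
  have hcountle : ∀ g : ZMod n, S1.count g ≤ m := by
    intro g
    rw [hS1]
    simp only [Multiset.count_add, Multiset.count_replicate, Multiset.count_singleton]
    rcases eq_or_ne ((0:ZMod n)) g with h1 | h1
    · rw [← h1, if_pos rfl, if_neg h10, if_neg (Ne.symm hc0)]
      omega
    · rw [if_neg h1]
      rcases eq_or_ne ((1:ZMod n)) g with h2 | h2
      · rw [← h2, if_pos rfl, if_neg (fun h => hc1 h.symm)]
        omega
      · rw [if_neg h2]
        split_ifs <;> omega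
  have hmax : maxMult S1 = m := by
    apply le_antisymm
    · exact Finset.sup_le fun g _ => hcountle g
    · have hmem : (0 : ZMod n) ∈ S1.toFinset := by
        rw [Multiset.mem_toFinset, ← Multiset.count_pos, hcount0]; omega
      calc m = S1.count 0 := hcount0.symm
        _ ≤ _ := Finset.le_sup (f := fun g => S1.count g) hmem
  refine ⟨hsum0, by rw [hS2]; exact hsum0, by rw [hS2, hmax]; simp, ?_⟩
  -- the hard part
  rintro ⟨l1, l2, hl1, hl2, hsum⟩
  rw [hS2] at hl2
  set f : ZMod n → ℕ := fun x => if x = 0 then 0 else if x = 1 then 2 else 1 with hf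
  have hfs : ∀ x ∈ S1, ((f x : ℕ) : ZMod n) = 2 * x := by
    intro x hx
    rw [hS1] at hx
    simp only [Multiset.mem_add, Multiset.mem_replicate, Multiset.mem_singleton] at hx
    rcases hx with (⟨-, rfl⟩ | ⟨-, rfl⟩) | rfl
    · simp [hf]
    · rw [hf]
      simp only [h10, if_false, one_ne_zero, if_neg]
      norm_num
    · rw [hf]
      simp only [hc0, hc1, if_false, if_neg]
      have h1 : ((1 : ℕ) : ZMod n) = 1 := by push_cast; rfl
      have : (2 : ZMod n) * ((c : ℕ) : ZMod n) = ((2 * c : ℕ) : ZMod n) := by push_cast; ring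
      rw [this]
      have h2c : 2 * c = n + 1 := by omega
      rw [h2c]
      push_cast
      simp [ZMod.natCast_self]
  have hT1 : (↑(l1.map f) : Multiset ℕ) =
      Multiset.replicate m 0 + Multiset.replicate m 2 + {1} := by
    rw [← Multiset.map_coe, hl1, hS1]
    simp only [Multiset.map_add, Multiset.map_replicate, Multiset.map_singleton]
    congr 1
    · congr 1
      · simp [hf]
      · simp [hf, h10]
    · simp [hf, hc0, hc1]
  have hT2 : (↑(l2.map f) : Multiset ℕ) =
      Multiset.replicate m 0 + Multiset.replicate m 2 + {1} := by
    rw [← Multiset.map_coe, hl2, hS1]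
    simp only [Multiset.map_add, Multiset.map_replicate, Multiset.map_singleton]
    congr 1
    · congr 1
      · simp [hf]
      · simp [hf, h10]
    · simp [hf, hc0, hc1]
  have hfl1 : ∀ x ∈ l1, ((f x : ℕ) : ZMod n) = 2 * x := fun x hx => hfs x (by
    rw [← hl1]; exact hx)
  have hfl2 : ∀ x ∈ l2, ((f x : ℕ) : ZMod n) = 2 * x := fun x hx => hfs x (by
    rw [← hl2]; exact hx)
  set u : List ℕ := l1.map f with hu
  set v : List ℕ := l2.map f with hv
  have hN : (((List.zipWith (· * ·) u v).sum : ℕ) : ZMod n) = 0 := by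
    rw [hu, hv, my_bridge n f l1 l2 hfl1 hfl2, hsum, mul_zero]
  rw [ZMod.natCast_eq_zero_iff] at hN
  -- lengths
  have hlen : u.length = v.length := by
    have h1 : (Multiset.card (↑u : Multiset ℕ)) = (Multiset.card (↑v : Multiset ℕ)) := by
      rw [hT1, hT2]
    simpa using h1
  have hzfst : (↑(u.zip v) : Multiset (ℕ × ℕ)).map Prod.fst =
      Multiset.replicate m 0 + Multiset.replicate m 2 + {1} := by
    rw [Multiset.map_coe, List.map_fst_zip (le_of_eq hlen)]
    exact hT1
  have hzsnd : (↑(u.zip v) : Multiset (ℕ × ℕ)).map Prod.snd =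
      Multiset.replicate m 0 + Multiset.replicate m 2 + {1} := by
    rw [Multiset.map_coe, List.map_snd_zip (ge_of_eq hlen)]
    exact hT2
  have hzsum : ((↑(u.zip v) : Multiset (ℕ × ℕ)).map fun p => p.1 * p.2).sum =
      (List.zipWith (· * ·) u v).sum := by
    rw [Multiset.map_coe, my_map_zip_eq_zipWith (· * ·) u v]
    rfl
  have := key_count m hm1 (by omega) (↑(u.zip v)) hzfst hzsnd
  rw [hzsum] at this
  exact this (by rw [← hnm]; exact hN)
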